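/- arXiv:2308.00649 — 2 statements merged into one kernel-verified Lean document; each statement's English description precedes it below -/
import Mathlib

section
/- Let (X_j) be i.i.d. random variables satisfying: X₁ has mean zero with P(|X₁| ≥ s) ≤ 2 exp(−s²/C₂²) for some C₂ > 0 and all s ≥ 0, and for a continuous nonnegative function η the log-moment generating function Λ̄(t₁,t₂) := log E[exp(t₁X₁ + t₂η(X₁))] is finite on ℝ × (−∞,T) for some 0 < T ≤ ∞. Then the sequence of random variables Z_n := n^{−1} Σ_{i=1}^n η(X_i) is exponentially tight with speed n: for every α < ∞ there exists a compact set K_α ⊂ [0,∞) such that limsup_{n→∞} n^{−1} log P(Z_n ∈ K_α^c) ≤ −α. -/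
open MeasureTheory Filter Topology ProbabilityTheory
open scoped ENNReal NNReal

noncomputable section

/-- The positive part of an extended real number, as an element of `ℝ≥0∞`. -/
def epos (x : EReal) : ℝ≥0∞ := if x = ⊤ then ⊤ else ENNReal.ofReal x.toReal

/-- The integral of an `EReal`-valued function (defined via positive and negative parts). -/
def eIntegral {α : Type*} [MeasurableSpace α] (μ : Measure α) (f : α → EReal) : EReal :=
  ((∫⁻ a, epos (f a) ∂μ : ℝ≥0∞) : EReal) - ((∫⁻ a, epos (-(f a)) ∂μ : ℝ≥0∞) : EReal)

/-- The log-moment generating function `Λ̄(t₁,t₂) = log E[exp (t₁ Z + t₂ η(Z))]` of a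
measure `μ` (the law of `Z`) together with a function `η`, with values in `EReal`. -/
def cgf2 (μ : Measure ℝ) (η : ℝ → ℝ) (t₁ t₂ : ℝ) : EReal :=
  ENNReal.log (∫⁻ x, ENNReal.ofReal (Real.exp (t₁ * x + t₂ * η x)) ∂μ)

/-- `Λ(u, b, c) = E[Λ̄(⟨u,g⟩ + b g₀, c)]`, where `g₀, g₁, g₂, …` are i.i.d. standard
Gaussians; since `⟨u,g⟩ + b g₀` is a centered Gaussian with variance `‖u‖₂² + b²`, this is
the expectation of `Λ̄(·, c)` under the Gaussian measure with that variance. -/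
def LamFn (μ : Measure ℝ) (η : ℝ → ℝ) (u : ℕ → ℝ) (b c : ℝ) : EReal :=
  eIntegral (gaussianReal 0 (Real.toNNReal ((∑' i, (u i)^2) + b^2)))
    (fun x => cgf2 μ η x c)

/-- The Legendre transform `Λ*(w,r,s) = sup_{(u,b,c) ∈ ℓ²×ℝ×ℝ} {⟨u,w⟩ + br + cs − Λ(u,b,c)}`. -/
def LamStar (μ : Measure ℝ) (η : ℝ → ℝ) (w : ℕ → ℝ) (r s : ℝ) : EReal :=
  ⨆ (u : ℕ → ℝ) (_ : Summable fun i => (u i)^2) (b : ℝ) (c : ℝ),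
    (((∑' i, u i * w i) + b * r + c * s : ℝ) : EReal) - LamFn μ η u b c

/-- The rate function `I(w,r,s) = Λ*(w, √(r² − ‖w‖₂²), s)`. -/
def Ifn (μ : Measure ℝ) (η : ℝ → ℝ) (w : ℕ → ℝ) (r s : ℝ) : EReal :=
  LamStar μ η w (Real.sqrt (r^2 - ∑' i, (w i)^2)) s
/-- First partial derivative operator. -/
def pd1 (F : ℝ → ℝ → ℝ) : ℝ → ℝ → ℝ := fun a b => deriv (fun x => F x b) a

/-- Second partial derivative operator. -/
def pd2 (F : ℝ → ℝ → ℝ) : ℝ → ℝ → ℝ := fun a b => deriv (fun y => F a y) b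

/-- `F(t₁,t₂)` is bounded by `C(t₂)(1 + |t₁|^e)` on `ℝ × (−∞,T)` for a continuous
positive function `C`. -/
def PolyBound (F : ℝ → ℝ → ℝ) (e : ℝ) (T : EReal) : Prop :=
  ∃ C : ℝ → ℝ, ContinuousOn C {c : ℝ | (c : EReal) < T} ∧
    (∀ c : ℝ, (c : EReal) < T → 0 < C c) ∧
    ∀ t₁ t₂ : ℝ, (t₂ : EReal) < T → |F t₁ t₂| ≤ C t₂ * (1 + |t₁| ^ e)

/-- Essential smoothness of a function `f : ℝ² → ℝ ∪ {∞}`: the interior of the effective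
domain is nonempty, `f` is differentiable there, and the gradient blows up along any
sequence in the interior converging to a boundary point of the domain. -/
def EssSmooth (f : ℝ × ℝ → EReal) : Prop :=
  (interior {q : ℝ × ℝ | f q ≠ ⊤}).Nonempty ∧
  (∀ q ∈ interior {q : ℝ × ℝ | f q ≠ ⊤},
      DifferentiableAt ℝ (fun q' => (f q').toReal) q) ∧
  ∀ (y : ℕ → ℝ × ℝ) (q₀ : ℝ × ℝ),
    (∀ j, y j ∈ interior {q : ℝ × ℝ | f q ≠ ⊤}) →
    Tendsto y atTop (nhds q₀) → q₀ ∈ frontier {q : ℝ × ℝ | f q ≠ ⊤} →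
    Tendsto (fun j => ‖fderiv ℝ (fun q' => (f q').toReal) (y j)‖) atTop atTop

/-- Assumption 2: the law `μ` of `X₁` is a probability measure with mean zero and
sub-Gaussian tails with constant `C₂`. -/
def Assumption2 (μ : Measure ℝ) (C₂ : ℝ) : Prop :=
  IsProbabilityMeasure μ ∧ (∫ x, x ∂μ) = 0 ∧ 0 < C₂ ∧
    ∀ s : ℝ, 0 ≤ s → μ {x : ℝ | s ≤ |x|} ≤ ENNReal.ofReal (2 * Real.exp (-(s^2) / C₂^2))

/-- Assumptions 3 and 4 on the log-moment generating function `Λ̄` of `(X₁, η(X₁))`: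
`η` is continuous, nonnegative and non-constant; `Λ̄` is finite on `ℝ × (−∞,T)` and
essentially smooth; the partial derivatives `∂₁^α ∂₂^β Λ̄` with `α + β ≤ 2` exist on
`ℝ × (−∞,T)` and satisfy the polynomial growth bounds `|∂₁^α∂₂^β Λ̄(t₁,t₂)| ≤
C̃(t₂)(1 + |t₁|^{2−α})`. -/
def Assumption34 (μ : Measure ℝ) (η : ℝ → ℝ) (T : EReal) : Prop :=
  Continuous η ∧ (∀ x, 0 ≤ η x) ∧ (∃ x y, η x ≠ η y) ∧ 0 < T ∧
  (∀ t₁ t₂ : ℝ, (t₂ : EReal) < T → cgf2 μ η t₁ t₂ ≠ ⊤) ∧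
  EssSmooth (fun q => cgf2 μ η q.1 q.2) ∧
  (∀ t₁ t₂ : ℝ, (t₂ : EReal) < T →
      DifferentiableAt ℝ (fun x => (cgf2 μ η x t₂).toReal) t₁ ∧
      DifferentiableAt ℝ (fun y => (cgf2 μ η t₁ y).toReal) t₂ ∧
      DifferentiableAt ℝ (fun x => pd1 (fun a b => (cgf2 μ η a b).toReal) x t₂) t₁ ∧
      DifferentiableAt ℝ (fun y => pd2 (fun a b => (cgf2 μ η a b).toReal) t₁ y) t₂ ∧
      DifferentiableAt ℝ (fun x => pd2 (fun a b => (cgf2 μ η a b).toReal) x t₂) t₁) ∧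
  PolyBound (fun a b => (cgf2 μ η a b).toReal) 2 T ∧
  PolyBound (pd1 (fun a b => (cgf2 μ η a b).toReal)) 1 T ∧
  PolyBound (pd2 (fun a b => (cgf2 μ η a b).toReal)) 2 T ∧
  PolyBound (pd1 (pd1 (fun a b => (cgf2 μ η a b).toReal))) 0 T ∧
  PolyBound (pd1 (pd2 (fun a b => (cgf2 μ η a b).toReal))) 1 T ∧
  PolyBound (pd2 (pd2 (fun a b => (cgf2 μ η a b).toReal))) 2 T

/-- `(X_j)` is an i.i.d. sequence on `(Ω, P)` with common law `μ`. -/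
def IsIIDWithLaw {Ω : Type*} [MeasurableSpace Ω] (P : Measure Ω) (X : ℕ → Ω → ℝ)
    (μ : Measure ℝ) : Prop :=
  (∀ j, Measurable (X j)) ∧ iIndepFun X P ∧
    ∀ j, Measure.map (X j) P = μ
/-- **Exponential tightness of `Z_n = n⁻¹ ∑ η(X_i)`** (Lemma 2.12).  Under Assumptions 2
and 3, the sequence `Z_n` is exponentially tight with speed `n`: for every `α < ∞` there
is a compact set `K_α ⊆ [0,∞)` with `limsup n⁻¹ log P(Z_n ∈ K_αᶜ) ≤ −α`. -/
theorem exponential_tightness_of_eta_averages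
    {Ω : Type*} [MeasurableSpace Ω]
    (P : Measure Ω) (hP : IsProbabilityMeasure P)
    (X : ℕ → Ω → ℝ) (μ : Measure ℝ) (hiid : IsIIDWithLaw P X μ)
    (C₂ : ℝ) (hA2 : Assumption2 μ C₂)
    (η : ℝ → ℝ) (hηcont : Continuous η) (hηnonneg : ∀ x, 0 ≤ η x)
    (T : EReal) (hT : 0 < T)
    (hfin : ∀ t₁ t₂ : ℝ, (t₂ : EReal) < T → cgf2 μ η t₁ t₂ ≠ ⊤) :
    ∀ α : ℝ, ∃ K : Set ℝ, IsCompact K ∧ K ⊆ Set.Ici 0 ∧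
      limsup (fun n : ℕ => ((n : ℝ)⁻¹ : EReal) *
        ENNReal.log (P {ω | ((n : ℝ)⁻¹ * ∑ i ∈ Finset.range n, η (X i ω)) ∈ Kᶜ}))
        atTop ≤ ((-α : ℝ) : EReal) := by
    classical
  obtain ⟨hXmeas, hXindep, hXlaw⟩ := hiid
  intro α
  -- choose 0 < t < T
  obtain ⟨t, ht0', htT⟩ := EReal.exists_between_coe_real hT
  have ht0 : 0 < t := by exact_mod_cast ht0'
  -- the exponential moment
  set f : ℝ → ℝ := fun x => Real.exp (t * η x) with hf
  have hfmeas : Measurable f := (Real.continuous_exp.comp (continuous_const.mul hηcont)).measurable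
  set L : ℝ≥0∞ := ∫⁻ x, ENNReal.ofReal (f x) ∂μ with hL
  have hLfin : L ≠ ⊤ := by
    have h := hfin 0 t htT
    simp only [cgf2, zero_mul, zero_add] at h
    intro htop
    apply h
    rw [show (∫⁻ x, ENNReal.ofReal (Real.exp (t * η x)) ∂μ) = L from rfl, htop]
    simp [ENNReal.log_top]
  have hL1 : 1 ≤ L := by
    have : (1 : ℝ≥0∞) = ∫⁻ _, 1 ∂μ := by
      have : IsProbabilityMeasure μ := hA2.1
      simp
    rw [this]
    refine lintegral_mono fun x => ?_
    rw [show (1 : ℝ≥0∞) = ENNReal.ofReal (Real.exp 0) by simp]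
    exact ENNReal.ofReal_le_ofReal (Real.exp_le_exp.2 (mul_nonneg ht0.le (hηnonneg x)))
  have hfint : Integrable f μ := by
    refine ⟨hfmeas.aestronglyMeasurable, ?_⟩
    rw [hasFiniteIntegral_iff_ofReal (Filter.Eventually.of_forall fun x => (Real.exp_pos _).le)]
    exact lt_of_le_of_ne le_top hLfin
  set m : ℝ := ∫ x, f x ∂μ with hm
  have hmL : ENNReal.ofReal m = L :=
    ofReal_integral_eq_lintegral_ofReal hfint (Filter.Eventually.of_forall fun x => (Real.exp_pos _).le)
  have hm1 : 1 ≤ m := by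
    have h := hmL ▸ hL1
    rwa [ENNReal.one_le_ofReal] at h
  have hm0 : 0 < m := lt_of_lt_of_le one_pos hm1
  -- the sequence Y i = η ∘ X i
  set Y : ℕ → Ω → ℝ := fun i => η ∘ X i with hY
  have hYmeas : ∀ i, Measurable (Y i) := fun i => hηcont.measurable.comp (hXmeas i)
  have hYindep : iIndepFun Y P :=
    hXindep.comp (fun _ => η) (fun _ => hηcont.measurable)
  have hYint : ∀ i, Integrable (fun ω => Real.exp (t * Y i ω)) P := by
    intro i
    have h1 : Integrable f (Measure.map (X i) P) := by rw [hXlaw i]; exact hfint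
    exact (integrable_map_measure hfmeas.aestronglyMeasurable (hXmeas i).aemeasurable).1 h1
  have hYmgf : ∀ i, mgf (Y i) P t = m := by
    intro i
    rw [hm, mgf, ← hXlaw i,
      integral_map (hXmeas i).aemeasurable hfmeas.aestronglyMeasurable]
    rfl
  -- choose the compact set
  set M : ℝ := max 1 ((Real.log m + α) / t) with hM
  refine ⟨Set.Icc 0 M, isCompact_Icc, Set.Icc_subset_Ici_self, ?_⟩
  have hbound : Real.log m - t * M ≤ -α := by
    have h1 : (Real.log m + α) / t ≤ M := le_max_right _ _
    have h2 : Real.log m + α ≤ t * M := by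
      rw [div_le_iff₀ ht0] at h1; linarith [h1]
    linarith
  refine Filter.limsup_le_of_le (by isBoundedDefault) ?_
  rw [Filter.eventually_atTop]
  refine ⟨1, fun n hn => ?_⟩
  have hn0 : (0 : ℝ) < n := by exact_mod_cast hn
  -- event inclusion
  have hsub : {ω | ((n : ℝ)⁻¹ * ∑ i ∈ Finset.range n, η (X i ω)) ∈ (Set.Icc 0 M)ᶜ}
      ⊆ {ω | (n : ℝ) * M ≤ (∑ i ∈ Finset.range n, Y i) ω} := by
    intro ω hω
    simp only [Set.mem_setOf_eq, Set.mem_compl_iff, Set.mem_Icc, not_and, not_le] at hω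
    have hS0 : 0 ≤ ∑ i ∈ Finset.range n, η (X i ω) :=
      Finset.sum_nonneg fun i _ => hηnonneg _
    have hMlt : M < (n : ℝ)⁻¹ * ∑ i ∈ Finset.range n, η (X i ω) :=
      hω (by positivity)
    have : (n : ℝ) * M < ∑ i ∈ Finset.range n, η (X i ω) := by
      have := mul_lt_mul_of_pos_left hMlt hn0
      rwa [mul_inv_cancel_left₀ (ne_of_gt hn0)] at this
    simp only [Set.mem_setOf_eq, Finset.sum_apply]
    exact this.le
  -- Chernoff
  have hSint : Integrable (fun ω => Real.exp (t * (∑ i ∈ Finset.range n, Y i) ω)) P :=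
    hYindep.integrable_exp_mul_sum hYmeas (fun i _ => hYint i)
  have hcher := measure_ge_le_exp_mul_mgf (μ := P) (X := ∑ i ∈ Finset.range n, Y i)
    ((n : ℝ) * M) ht0.le hSint
  rw [hYindep.mgf_sum hYmeas, Finset.prod_congr rfl (fun i _ => hYmgf i),
    Finset.prod_const, Finset.card_range] at hcher
  have hmeasle : P {ω | ((n : ℝ)⁻¹ * ∑ i ∈ Finset.range n, η (X i ω)) ∈ (Set.Icc 0 M)ᶜ}
      ≤ ENNReal.ofReal (Real.exp ((n : ℝ) * (Real.log m - t * M))) := by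
    refine le_trans (measure_mono hsub) ?_
    rw [ENNReal.le_ofReal_iff_toReal_le (measure_ne_top _ _) (Real.exp_pos _).le]
    refine le_trans hcher (le_of_eq ?_)
    rw [← Real.exp_log (show (0:ℝ) < m ^ n by positivity), ← Real.exp_add,
      Real.log_pow]
    ring_nf
  -- pass to logs and multiply by n⁻¹
  have hlogle : ENNReal.log (P {ω | ((n : ℝ)⁻¹ * ∑ i ∈ Finset.range n, η (X i ω))
        ∈ (Set.Icc 0 M)ᶜ})
      ≤ (((n : ℝ) * (Real.log m - t * M) : ℝ) : EReal) := by
    refine le_trans (ENNReal.log_monotone hmeasle) ?_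
    rw [ENNReal.log_ofReal_of_pos (Real.exp_pos _), Real.log_exp]
  calc ((n : ℝ)⁻¹ : EReal) * ENNReal.log (P {ω | ((n : ℝ)⁻¹ *
          ∑ i ∈ Finset.range n, η (X i ω)) ∈ (Set.Icc 0 M)ᶜ})
      = ((((n : ℝ)⁻¹ : ℝ) : EReal)) * ENNReal.log (P {ω | ((n : ℝ)⁻¹ *
          ∑ i ∈ Finset.range n, η (X i ω)) ∈ (Set.Icc 0 M)ᶜ}) := by
        rw [EReal.coe_inv]
    _ ≤ ((((n : ℝ)⁻¹ : ℝ) : EReal)) * (((n : ℝ) * (Real.log m - t * M) : ℝ) : EReal) :=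
        mul_le_mul_of_nonneg_left hlogle (EReal.coe_nonneg.2 (inv_nonneg.2 hn0.le))
    _ = (((n : ℝ)⁻¹ * ((n : ℝ) * (Real.log m - t * M)) : ℝ) : EReal) := by
        rw [← EReal.coe_mul]
    _ = ((Real.log m - t * M : ℝ) : EReal) := by
        rw [inv_mul_cancel_left₀ (ne_of_gt hn0)]
    _ ≤ ((-α : ℝ) : EReal) := by exact_mod_cast hbound
end
end

section
/- Let μ be the law of a mean-zero random variable satisfying: P(|X| ≥ s) ≤ 2 exp(−s²/C₂²) for some C₂ > 0, and for a continuous nonnegative η the function Λ̄(t₁,t₂) := log ∫ exp(t₁x + t₂η(x)) dμ(x) is finite on ℝ × (−∞,T) with second-order partial derivatives bounded as |∂₁^α∂₂^β Λ̄(t₁,t₂)| ≤ C̃(t₂)(1+|t₁|^{2−α}) for α+β ≤ 2 and a continuous C̃. For (s₁,s₂) ∈ ℝ × (−∞,T), define the tilted measure μ̃_{s₁,s₂} by dμ̃_{s₁,s₂}/dμ(x) = exp(s₁x + s₂η(x) − Λ̄(s₁,s₂)). Then for every s₂ ∈ (−∞,T) there exists a constant C = C(s₂) > 0 such that for every s₁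 ∈ ℝ, a random variable X̃ with law μ̃_{s₁,s₂} satisfies P(|X̃ − E[X̃]| > t) ≤ 2 exp(−t²/C²) for all t ≥ 0. -/
open MeasureTheory Filter Topology ProbabilityTheory
open scoped ENNReal NNReal

noncomputable section

/-- The exponentially tilted measure `μ̃_{s₁,s₂}` with
`dμ̃/dμ(x) = exp(s₁ x + s₂ η(x) − Λ̄(s₁,s₂))`. -/
def tiltedMeas (μ : Measure ℝ) (η : ℝ → ℝ) (s₁ s₂ : ℝ) : Measure ℝ :=
  μ.withDensity fun x =>
    ENNReal.ofReal (Real.exp (s₁ * x + s₂ * η x - (cgf2 μ η s₁ s₂).toReal))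

lemma lip_of_deriv_bound' {g : ℝ → ℝ} (hg : ∀ x, DifferentiableAt ℝ g x) {K : ℝ}
    (hK : ∀ x, |deriv g x| ≤ K) (a b : ℝ) : |g b - g a| ≤ K * |b - a| := by
  have main : ∀ u v : ℝ, u ≤ v → |g v - g u| ≤ K * (v - u) := by
    intro u v huv
    have := norm_image_sub_le_of_norm_deriv_le_segment' (f := g) (f' := deriv g) (a := u) (b := v)
      (fun x _ => (hg x).hasDerivAt.hasDerivWithinAt) (C := K)
      (fun x _ => hK x) v (Set.right_mem_Icc.2 huv)
    simpa [Real.norm_eq_abs] using this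
  rcases le_total a b with h | h
  · rw [abs_of_nonneg (sub_nonneg.2 h)]; exact main a b h
  · rw [abs_of_nonpos (sub_nonpos.2 h), abs_sub_comm]
    simpa using main b a h

lemma taylor_bound' {g : ℝ → ℝ} (hg : ∀ x, DifferentiableAt ℝ g x)
    (hg' : ∀ x, DifferentiableAt ℝ (deriv g) x) {K : ℝ}
    (hK : ∀ x, |deriv (deriv g) x| ≤ K) (s l : ℝ) :
    |g (s + l) - g s - l * deriv g s| ≤ K * l ^ 2 := by
  have hK0 : 0 ≤ K := le_trans (abs_nonneg _) (hK 0)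
  set h : ℝ → ℝ := fun x => g (s + x) - x * deriv g s with hh_def
  have hh : ∀ x, HasDerivAt h (deriv g (s + x) - deriv g s) x := by
    intro x
    have h1 : HasDerivAt (fun x : ℝ => g (s + x)) (deriv g (s + x)) x := by
      have := (hg (s + x)).hasDerivAt.comp x ((hasDerivAt_id x).const_add s)
      simp at this; exact this
    have := h1.sub ((hasDerivAt_id x).mul_const (deriv g s)); simp at this; exact this
  have hlip : ∀ a b : ℝ, |deriv g b - deriv g a| ≤ K * |b - a| :=
    lip_of_deriv_bound' hg' hK
  have key : |h l - h 0| ≤ K * l ^ 2 := by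
    rcases le_total 0 l with hl | hl
    · have := norm_image_sub_le_of_norm_deriv_le_segment'
        (f := h) (f' := fun x => deriv g (s + x) - deriv g s) (a := 0) (b := l)
        (fun x _ => (hh x).hasDerivWithinAt) (C := K * l)
        (fun x hx => by
          have h1 := hlip s (s + x)
          have hx0 : 0 ≤ x := hx.1
          have hxl : x ≤ l := hx.2.le
          simp only [add_sub_cancel_left, abs_of_nonneg hx0] at h1
          calc ‖deriv g (s + x) - deriv g s‖ = |deriv g (s + x) - deriv g s| := rfl
            _ ≤ K * x := h1
            _ ≤ K * l := by nlinarith)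
        l (Set.right_mem_Icc.2 hl)
      calc |h l - h 0| ≤ K * l * (l - 0) := this
        _ = K * l ^ 2 := by ring
    · have := norm_image_sub_le_of_norm_deriv_le_segment'
        (f := h) (f' := fun x => deriv g (s + x) - deriv g s) (a := l) (b := 0)
        (fun x _ => (hh x).hasDerivWithinAt) (C := K * (-l))
        (fun x hx => by
          have h1 := hlip s (s + x)
          have hx0 : x ≤ 0 := hx.2.le
          have hxl : l ≤ x := hx.1
          simp only [add_sub_cancel_left, abs_of_nonpos hx0] at h1
          calc ‖deriv g (s + x) - deriv g s‖ = |deriv g (s + x) - deriv g s| := rfl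
            _ ≤ K * (-x) := h1
            _ ≤ K * (-l) := by nlinarith)
        0 (Set.right_mem_Icc.2 hl)
      rw [abs_sub_comm]
      calc |h 0 - h l| ≤ K * (-l) * (0 - l) := this
        _ = K * l ^ 2 := by ring
  have heq : h l - h 0 = g (s + l) - g s - l * deriv g s := by simp [hh_def]; ring
  rwa [heq] at key


/-- **Uniform sub-Gaussianity of tilted measures** (Lemma 7.1).  For every `s₂ < T`
there is `C = C(s₂) > 0` such that for every `s₁ ∈ ℝ`, a random variable `X̃` with the
tilted law `μ̃_{s₁,s₂}` satisfies `P(|X̃ − E[X̃]| > t) ≤ 2 exp(−t²/C²)` for all `t ≥ 0`. -/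
theorem tilted_measure_subgaussian
    (μ : Measure ℝ) (C₂ : ℝ) (hA2 : Assumption2 μ C₂)
    (η : ℝ → ℝ) (hηcont : Continuous η) (hηnonneg : ∀ x, 0 ≤ η x)
    (T : EReal)
    (hfin : ∀ t₁ t₂ : ℝ, (t₂ : EReal) < T → cgf2 μ η t₁ t₂ ≠ ⊤)
    (hderiv : ∀ t₁ t₂ : ℝ, (t₂ : EReal) < T →
      DifferentiableAt ℝ (fun x => (cgf2 μ η x t₂).toReal) t₁ ∧
      DifferentiableAt ℝ (fun y => (cgf2 μ η t₁ y).toReal) t₂ ∧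
      DifferentiableAt ℝ (fun x => pd1 (fun a b => (cgf2 μ η a b).toReal) x t₂) t₁ ∧
      DifferentiableAt ℝ (fun y => pd2 (fun a b => (cgf2 μ η a b).toReal) t₁ y) t₂ ∧
      DifferentiableAt ℝ (fun x => pd2 (fun a b => (cgf2 μ η a b).toReal) x t₂) t₁)
    (hb0 : PolyBound (fun a b => (cgf2 μ η a b).toReal) 2 T)
    (hb1 : PolyBound (pd1 (fun a b => (cgf2 μ η a b).toReal)) 1 T)
    (hb2 : PolyBound (pd2 (fun a b => (cgf2 μ η a b).toReal)) 2 T)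
    (hb3 : PolyBound (pd1 (pd1 (fun a b => (cgf2 μ η a b).toReal))) 0 T)
    (hb4 : PolyBound (pd1 (pd2 (fun a b => (cgf2 μ η a b).toReal))) 1 T)
    (hb5 : PolyBound (pd2 (pd2 (fun a b => (cgf2 μ η a b).toReal))) 2 T) :
    ∀ s₂ : ℝ, (s₂ : EReal) < T →
      ∃ C : ℝ, 0 < C ∧ ∀ s₁ t : ℝ, 0 ≤ t →
        tiltedMeas μ η s₁ s₂
            {x | t < |x - ∫ y, y ∂(tiltedMeas μ η s₁ s₂)|} ≤
          ENNReal.ofReal (2 * Real.exp (-t^2 / C^2)) := by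
  intro s₂ hs₂
  classical
  haveI hμprob : IsProbabilityMeasure μ := hA2.1
  obtain ⟨C₃, -, hC₃pos, hC₃⟩ := hb3
  set K : ℝ := 2 * C₃ s₂ with hK_def
  have hKpos : 0 < K := by have := hC₃pos s₂ hs₂; positivity
  set f : ℝ → ℝ := fun x => (cgf2 μ η x s₂).toReal with hf_def
  have hgdiff : ∀ x, DifferentiableAt ℝ f x := fun x => (hderiv x s₂ hs₂).1
  have hgdiff' : ∀ x, DifferentiableAt ℝ (deriv f) x := fun x => (hderiv x s₂ hs₂).2.2.1
  have hKb : ∀ x, |deriv (deriv f) x| ≤ K := by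
    intro x
    have h1 := hC₃ x s₂ hs₂
    rw [Real.rpow_zero] at h1
    calc |deriv (deriv f) x|
        = |pd1 (pd1 (fun a b => (cgf2 μ η a b).toReal)) x s₂| := rfl
      _ ≤ C₃ s₂ * (1 + 1) := h1
      _ = K := by rw [hK_def]; ring
  have hTay : ∀ a l : ℝ, f (a + l) - f a - l * deriv f a ≤ K * l ^ 2 := fun a l =>
    (abs_le.1 (taylor_bound' hgdiff hgdiff' hKb a l)).2
  set B : ℝ := Real.exp K - 1 with hB_def
  have hB0 : 0 ≤ B := by
    have := Real.one_le_exp hKpos.le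
    rw [hB_def]; linarith
  have hlog2 : 0 < Real.log 2 := Real.log_pos one_lt_two
  set C : ℝ := max (4 * Real.sqrt K) ((2 * B + 1) / Real.sqrt (Real.log 2)) with hC_def
  have hCpos : 0 < C :=
    lt_of_lt_of_le (by positivity) (le_max_left _ _)
  refine ⟨C, hCpos, ?_⟩
  intro s₁ t ht
  set ν := tiltedMeas μ η s₁ s₂ with hν_def
  set m := ∫ y, y ∂ν with hm_def
  set a := deriv f s₁ with ha_def
  have hmeasE : ∀ c : ℝ, Measurable fun x => ENNReal.ofReal (Real.exp (c * x + s₂ * η x)) :=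
    fun c => (ENNReal.continuous_ofReal.comp (Real.continuous_exp.comp
      ((continuous_const.mul continuous_id).add (continuous_const.mul hηcont)))).measurable
  set Z : ℝ → ℝ≥0∞ := fun c => ∫⁻ x, ENNReal.ofReal (Real.exp (c * x + s₂ * η x)) ∂μ with hZ_def
  have hcgf : ∀ c : ℝ, cgf2 μ η c s₂ = ENNReal.log (Z c) := fun c => rfl
  have hZtop : ∀ c, Z c ≠ ⊤ := by
    intro c
    have := hfin c s₂ hs₂
    rw [hcgf] at this
    simpa using this
  have hZ0 : ∀ c, Z c ≠ 0 := by
    intro c h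
    have h2 := (lintegral_eq_zero_iff (hmeasE c)).1 h
    obtain ⟨x, hx⟩ := h2.exists
    simp only [Pi.zero_apply, ENNReal.ofReal_eq_zero] at hx
    exact absurd hx (not_le.2 (Real.exp_pos _))
  have hfZ : ∀ c : ℝ, f c = Real.log (Z c).toReal := by
    intro c
    show (cgf2 μ η c s₂).toReal = _
    rw [hcgf, ENNReal.log_pos_real (hZ0 c) (hZtop c)]
    simp
  have hZexp : ∀ c : ℝ, Z c = ENNReal.ofReal (Real.exp (f c)) := by
    intro c
    rw [hfZ c, Real.exp_log (ENNReal.toReal_pos (hZ0 c) (hZtop c)),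
      ENNReal.ofReal_toReal (hZtop c)]
  have hd : Measurable fun x => ENNReal.ofReal (Real.exp (s₁ * x + s₂ * η x - f s₁)) :=
    (ENNReal.continuous_ofReal.comp (Real.continuous_exp.comp
      ((((continuous_const.mul continuous_id).add
        (continuous_const.mul hηcont)).sub continuous_const)))).measurable
  have hνd : ν = μ.withDensity fun x =>
      ENNReal.ofReal (Real.exp (s₁ * x + s₂ * η x - f s₁)) := rfl
  have hmeasg : ∀ c : ℝ, Measurable fun x : ℝ => ENNReal.ofReal (Real.exp (c * x)) :=
    fun c => (ENNReal.continuous_ofReal.comp (Real.continuous_exp.comp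
      (continuous_const.mul continuous_id))).measurable
  have hM : ∀ c : ℝ, ∫⁻ x, ENNReal.ofReal (Real.exp (c * x)) ∂ν
      = ENNReal.ofReal (Real.exp (f (s₁ + c) - f s₁)) := by
    intro c
    rw [hνd, lintegral_withDensity_eq_lintegral_mul μ hd (hmeasg c)]
    have heq : ∀ x : ℝ, ((fun x => ENNReal.ofReal (Real.exp (s₁ * x + s₂ * η x - f s₁)))
        * fun x => ENNReal.ofReal (Real.exp (c * x))) x
        = ENNReal.ofReal (Real.exp ((s₁ + c) * x + s₂ * η x))
          * ENNReal.ofReal (Real.exp (- f s₁)) := by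
      intro x
      simp only [Pi.mul_apply]
      rw [← ENNReal.ofReal_mul (Real.exp_nonneg _), ← ENNReal.ofReal_mul (Real.exp_nonneg _),
        ← Real.exp_add, ← Real.exp_add]
      ring_nf
    simp_rw [heq]
    rw [lintegral_mul_const _ (hmeasE (s₁ + c))]
    have hZc : (∫⁻ x, ENNReal.ofReal (Real.exp ((s₁ + c) * x + s₂ * η x)) ∂μ) = Z (s₁ + c) := rfl
    rw [hZc, hZexp (s₁ + c), ← ENNReal.ofReal_mul (Real.exp_nonneg _), ← Real.exp_add,
      ← sub_eq_add_neg]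
  have hνuniv : ν Set.univ = 1 := by
    have h0 := hM 0
    simp only [zero_mul, Real.exp_zero, ENNReal.ofReal_one, add_zero, sub_self] at h0
    simpa using h0
  haveI hνprob : IsProbabilityMeasure ν := ⟨hνuniv⟩
  have hcher : ∀ (c r : ℝ) (S : Set ℝ), (∀ x ∈ S, r ≤ c * x) →
      ν S ≤ ENNReal.ofReal (Real.exp (f (s₁ + c) - f s₁ - r)) := by
    intro c r S hS
    have h1 : ν S ≤ ν {x | ENNReal.ofReal (Real.exp r) ≤ ENNReal.ofReal (Real.exp (c * x))} :=
      measure_mono fun x hx => ENNReal.ofReal_le_ofReal (Real.exp_le_exp.2 (hS x hx))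
    have h2 := mul_meas_ge_le_lintegral₀ (μ := ν) (hmeasg c).aemeasurable
      (ENNReal.ofReal (Real.exp r))
    rw [hM c] at h2
    have hε0 : ENNReal.ofReal (Real.exp r) ≠ 0 := by
      simp [ENNReal.ofReal_eq_zero, not_le, Real.exp_pos r]
    have hεtop : ENNReal.ofReal (Real.exp r) ≠ ⊤ := ENNReal.ofReal_ne_top
    have h3 : ν {x | ENNReal.ofReal (Real.exp r) ≤ ENNReal.ofReal (Real.exp (c * x))}
        ≤ ENNReal.ofReal (Real.exp (f (s₁ + c) - f s₁)) / ENNReal.ofReal (Real.exp r) := by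
      rw [ENNReal.le_div_iff_mul_le (Or.inl hε0) (Or.inl hεtop), mul_comm]
      exact h2
    refine le_trans (le_trans h1 h3) (le_of_eq ?_)
    rw [← ENNReal.ofReal_div_of_pos (Real.exp_pos r), ← Real.exp_sub]
  have htail : ∀ u : ℝ, 0 ≤ u →
      ν {x | u < |x - a|} ≤ ENNReal.ofReal (2 * Real.exp (-u ^ 2 / (4 * K))) := by
    intro u hu
    set c := u / (2 * K) with hc_def
    have hc0 : 0 ≤ c := by positivity
    have hexp : K * c ^ 2 - c * u = -u ^ 2 / (4 * K) := by
      rw [hc_def]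
      field_simp
      ring
    have hnc : (-c) ^ 2 = c ^ 2 := by ring
    have h1 : ν {x | a + u < x} ≤ ENNReal.ofReal (Real.exp (-u ^ 2 / (4 * K))) := by
      refine le_trans (hcher c (c * (a + u)) _ fun x hx =>
        mul_le_mul_of_nonneg_left (le_of_lt hx) hc0) ?_
      apply ENNReal.ofReal_le_ofReal
      apply Real.exp_le_exp.2
      have hT := hTay s₁ c
      nlinarith [hT, hexp]
    have h2 : ν {x | x < a - u} ≤ ENNReal.ofReal (Real.exp (-u ^ 2 / (4 * K))) := by
      refine le_trans (hcher (-c) ((-c) * (a - u)) _ fun x hx =>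
        mul_le_mul_of_nonpos_left (le_of_lt hx) (neg_nonpos.2 hc0)) ?_
      apply ENNReal.ofReal_le_ofReal
      apply Real.exp_le_exp.2
      have hT := hTay s₁ (-c)
      rw [hnc] at hT
      nlinarith [hT, hexp]
    have hsub : {x : ℝ | u < |x - a|} ⊆ {x | a + u < x} ∪ {x | x < a - u} := by
      intro x hx
      simp only [Set.mem_setOf_eq] at hx
      rcases lt_abs.1 hx with h | h
      · left; simp only [Set.mem_setOf_eq]; linarith
      · right; simp only [Set.mem_setOf_eq]; linarith
    calc ν {x | u < |x - a|} ≤ ν ({x | a + u < x} ∪ {x | x < a - u}) := measure_mono hsub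
      _ ≤ ν {x | a + u < x} + ν {x | x < a - u} := measure_union_le _ _
      _ ≤ ENNReal.ofReal (Real.exp (-u ^ 2 / (4 * K)))
          + ENNReal.ofReal (Real.exp (-u ^ 2 / (4 * K))) := add_le_add h1 h2
      _ = ENNReal.ofReal (2 * Real.exp (-u ^ 2 / (4 * K))) := by
          rw [← ENNReal.ofReal_add (Real.exp_nonneg _) (Real.exp_nonneg _)]
          ring_nf
  have hInt : ∀ c : ℝ, Integrable (fun x => Real.exp (c * x)) ν := by
    intro c
    refine ⟨(Real.continuous_exp.comp (continuous_const.mul continuous_id)).aestronglyMeasurable, ?_⟩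
    rw [hasFiniteIntegral_iff_ofReal (ae_of_all _ fun x => Real.exp_nonneg _)]
    rw [hM c]
    exact ENNReal.ofReal_lt_top
  have hIexp : ∀ c : ℝ, ∫ x, Real.exp (c * x) ∂ν = Real.exp (f (s₁ + c) - f s₁) := by
    intro c
    rw [integral_eq_lintegral_of_nonneg_ae (ae_of_all _ fun x => Real.exp_nonneg _)
      (hInt c).1, hM c, ENNReal.toReal_ofReal (Real.exp_nonneg _)]
  have hIntId : Integrable (fun x : ℝ => x) ν := by
    have hgi : Integrable (fun x => Real.exp (1 * x) + Real.exp ((-1) * x)) ν :=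
      (hInt 1).add (hInt (-1))
    refine hgi.mono aestronglyMeasurable_id (ae_of_all _ fun x => ?_)
    rw [Real.norm_eq_abs, Real.norm_eq_abs]
    have h1 : |x| ≤ Real.exp x + Real.exp (-x) := by
      rcases le_total 0 x with hx | hx
      · rw [abs_of_nonneg hx]
        nlinarith [Real.add_one_le_exp x, Real.exp_pos (-x)]
      · rw [abs_of_nonpos hx]
        nlinarith [Real.add_one_le_exp (-x), Real.exp_pos x]
    have h2 : (0:ℝ) ≤ Real.exp (1 * x) + Real.exp ((-1) * x) := by positivity
    rw [abs_of_nonneg h2]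
    simpa using h1
  have hdir : ∀ σ : ℝ, (σ = 1 ∨ σ = -1) → 1 + (σ * m - σ * a) ≤ Real.exp K := by
    intro σ hσ
    have hσa : f (s₁ + σ) - f s₁ - σ * a ≤ K := by
      have hT := hTay s₁ σ
      have hσ2 : σ ^ 2 = 1 := by rcases hσ with h | h <;> rw [h] <;> norm_num
      rw [hσ2, mul_one] at hT
      exact hT
    have h1 : ∫ x, ((1 - σ * a) + σ * x) ∂ν ≤ ∫ x, Real.exp (-(σ * a)) * Real.exp (σ * x) ∂ν := by
      refine integral_mono ?_ ?_ fun x => ?_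
      · exact (integrable_const (1 - σ * a)).add (hIntId.const_mul σ)
      · exact (hInt σ).const_mul _
      · calc (1 - σ * a) + σ * x = (σ * x - σ * a) + 1 := by ring
          _ ≤ Real.exp (σ * x - σ * a) := Real.add_one_le_exp _
          _ = Real.exp (-(σ * a)) * Real.exp (σ * x) := by rw [← Real.exp_add]; ring_nf
    rw [integral_add (integrable_const (1 - σ * a)) (hIntId.const_mul σ),
        integral_const, integral_const_mul, integral_const_mul, hIexp σ] at h1
    simp only [measure_univ, probReal_univ, ENNReal.toReal_one, smul_eq_mul, one_mul] at h1
    calc 1 + (σ * m - σ * a) = (1 - σ * a) + σ * m := by ring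
      _ ≤ Real.exp (-(σ * a)) * Real.exp (f (s₁ + σ) - f s₁) := h1
      _ = Real.exp (f (s₁ + σ) - f s₁ - σ * a) := by rw [← Real.exp_add]; ring_nf
      _ ≤ Real.exp K := Real.exp_le_exp.2 hσa
  have hmean : |m - a| ≤ B := by
    have e1 := hdir 1 (Or.inl rfl)
    have e2 := hdir (-1) (Or.inr rfl)
    rw [abs_le]
    constructor <;> [linarith [e2]; linarith [e1]]
  by_cases hcase : t ^ 2 ≤ C ^ 2 * Real.log 2
  · have h1 : (1 : ℝ) ≤ 2 * Real.exp (-t ^ 2 / C ^ 2) := by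
      have hC2 : (0:ℝ) < C ^ 2 := by positivity
      have hle : -Real.log 2 ≤ -t ^ 2 / C ^ 2 := by
        rw [neg_div, neg_le_neg_iff, div_le_iff₀ hC2]
        linarith
      have h2 := Real.exp_le_exp.2 hle
      rw [Real.exp_neg, Real.exp_log two_pos] at h2
      linarith
    calc ν {x | t < |x - m|} ≤ ν Set.univ := measure_mono (Set.subset_univ _)
      _ = 1 := hνuniv
      _ ≤ ENNReal.ofReal (2 * Real.exp (-t ^ 2 / C ^ 2)) := by rwa [ENNReal.one_le_ofReal]
  · push_neg at hcase
    have hC1 : 4 * Real.sqrt K ≤ C := le_max_left _ _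
    have hC2 : 2 * B + 1 ≤ C * Real.sqrt (Real.log 2) := by
      have hh := le_max_right (4 * Real.sqrt K) ((2 * B + 1) / Real.sqrt (Real.log 2))
      have hs : (0:ℝ) < Real.sqrt (Real.log 2) := Real.sqrt_pos.2 hlog2
      calc 2 * B + 1 = ((2 * B + 1) / Real.sqrt (Real.log 2)) * Real.sqrt (Real.log 2) := by
            field_simp
        _ ≤ C * Real.sqrt (Real.log 2) := mul_le_mul_of_nonneg_right hh hs.le
    have hC16K : 16 * K ≤ C ^ 2 := by
      calc 16 * K = (4 * Real.sqrt K) ^ 2 := by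
            rw [mul_pow, Real.sq_sqrt hKpos.le]; ring
        _ ≤ C ^ 2 := pow_le_pow_left₀ (by positivity) hC1 2
    have hClog : C ^ 2 * Real.log 2 = (C * Real.sqrt (Real.log 2)) ^ 2 := by
      rw [mul_pow, Real.sq_sqrt hlog2.le]
    have htB : 2 * B + 1 ≤ t := by
      nlinarith [hcase, hC2, ht, hB0, hClog]
    have hBt : B ≤ t / 2 := by linarith
    have hsubset : {x : ℝ | t < |x - m|} ⊆ {x | t / 2 < |x - a|} := by
      intro x hx
      simp only [Set.mem_setOf_eq] at hx ⊢
      have h3 : |x - m| ≤ |x - a| + |m - a| := by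
        have h4 := abs_sub_le x a m
        rw [abs_sub_comm a m] at h4
        exact h4
      linarith [hmean]
    have hmain := htail (t / 2) (by linarith)
    refine le_trans (measure_mono hsubset) (le_trans hmain ?_)
    apply ENNReal.ofReal_le_ofReal
    have he : (t / 2) ^ 2 / (4 * K) = t ^ 2 / (16 * K) := by
      ring
    have hdd : t ^ 2 / C ^ 2 ≤ t ^ 2 / (16 * K) :=
      div_le_div_of_nonneg_left (sq_nonneg t) (by positivity) hC16K
    have hexp2 : -(t / 2) ^ 2 / (4 * K) ≤ -t ^ 2 / C ^ 2 := by
      rw [neg_div, neg_div, neg_le_neg_iff, he]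
      exact hdd
    have := Real.exp_le_exp.2 hexp2
    linarith
end
end
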